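/- Let f be a Hurwitz stable real polynomial of degree n with positive coefficients, and let N > n. Then for every ε > 0 there exist positive numbers a_{n+1}, ..., a_N, all in (0, ε), such that the polynomial F(s) = f(s) + a_{n+1} s^{n+1} + ... + a_N s^N is Hurwitz stable. -/

import Mathlib

/-- A real polynomial is Hurwitz stable if all its complex zeros have negative real parts. -/
def HurwitzStable (f : Polynomial ℝ) : Prop :=
  ∀ z : ℂ, Polynomial.aeval z f = 0 → z.re < 0

lemma aeval_sum_eq (c : ℕ → ℝ) (k : ℕ) (z : ℂ) :
    Polynomial.aeval z (∑ i ∈ Finset.range k, Polynomial.C (c i) * Polynomial.X ^ i)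
    = ∑ i ∈ Finset.range k, (c i : ℂ) * z ^ i := by simp

lemma hurwitz_step (m : ℕ) (hm : 1 ≤ m) (c : ℕ → ℝ) (hc : ∀ i ≤ m, 0 < c i)
    (hg : HurwitzStable (∑ i ∈ Finset.range (m + 1), Polynomial.C (c i) * Polynomial.X ^ i))
    (ε : ℝ) (hε : 0 < ε) :
    ∃ δ : ℝ, 0 < δ ∧ δ < ε ∧
      HurwitzStable (∑ i ∈ Finset.range (m + 2),
        Polynomial.C (Function.update c (m + 1) δ i) * Polynomial.X ^ i) := by
  set G : ℂ → ℂ := fun z => ∑ i ∈ Finset.range (m + 1), (c i : ℂ) * z ^ i with hGdef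
  have hcm : 0 < c m := hc m le_rfl
  set S : ℝ := ∑ i ∈ Finset.range m, c i with hSdef
  have hS : 0 ≤ S := Finset.sum_nonneg fun i hi =>
    (hc i (le_of_lt (Finset.mem_range.mp hi))).le
  set R : ℝ := S / c m + 1 with hRdef
  have hR1 : 1 ≤ R := by
    have h : 0 ≤ S / c m := div_nonneg hS hcm.le
    rw [hRdef]; linarith
  have hR0 : 0 < R := by linarith
  set K : Set ℂ := Metric.closedBall (0 : ℂ) R ∩ {z | 0 ≤ z.re} with hKdef
  have hKc : IsCompact K :=
    (isCompact_closedBall _ _).inter_right (isClosed_le continuous_const Complex.continuous_re)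
  have hK0 : (0 : ℂ) ∈ K := by
    constructor
    · simpa [Metric.mem_closedBall] using hR0.le
    · simp
  have hGcont : Continuous fun z => ‖G z‖ :=
    continuous_norm.comp
      (continuous_finset_sum _ fun i _ => continuous_const.mul (continuous_pow i))
  obtain ⟨x, hxK, hxmin⟩ := hKc.exists_isMinOn ⟨0, hK0⟩ hGcont.continuousOn
  set δ0 : ℝ := ‖G x‖ with hδ0def
  have hδ0 : 0 < δ0 := by
    rw [hδ0def]
    have hGx : G x ≠ 0 := by
      intro h
      have := hg x (by rw [aeval_sum_eq]; exact h)
      exact absurd this (not_lt.mpr hxK.2)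
    simpa using hGx
  have hRpow : 0 < R ^ (m + 1) := pow_pos hR0 _
  set δ : ℝ := min (ε / 2) (δ0 / (R ^ (m + 1) + 1)) with hδdef
  have hδpos : 0 < δ := lt_min (by linarith) (div_pos hδ0 (by linarith))
  have hδε : δ < ε := by
    have := min_le_left (ε / 2) (δ0 / (R ^ (m + 1) + 1))
    rw [hδdef]; linarith
  have hδ0bd : δ * (R ^ (m + 1) + 1) ≤ δ0 := by
    have h1 : δ ≤ δ0 / (R ^ (m + 1) + 1) := min_le_right _ _
    exact (le_div_iff₀ (by linarith)).mp h1
  refine ⟨δ, hδpos, hδε, ?_⟩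
  intro z hz
  rw [aeval_sum_eq] at hz
  have heval : G z + (δ : ℂ) * z ^ (m + 1) = 0 := by
    rw [← hz, Finset.sum_range_succ, Function.update_self]
    congr 1
    refine Finset.sum_congr rfl fun i hi => ?_
    rw [Function.update_of_ne (Nat.ne_of_lt (Finset.mem_range.mp hi))]
  by_contra hre
  push_neg at hre
  rcases le_or_gt (‖z‖) R with hle | hgt
  · -- compact region case
    have hzK : z ∈ K := ⟨by simpa [Metric.mem_closedBall] using hle, hre⟩
    have hmin : δ0 ≤ ‖G z‖ := hxmin hzK
    have h1 : G z = -((δ : ℂ) * z ^ (m + 1)) := by linear_combination heval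
    have hGz : ‖G z‖ = δ * ‖z‖ ^ (m + 1) := by
      rw [h1, norm_neg, norm_mul, norm_pow, Complex.norm_real, Real.norm_eq_abs, abs_of_pos hδpos]
    have hpow : ‖z‖ ^ (m + 1) ≤ R ^ (m + 1) :=
      pow_le_pow_left₀ (norm_nonneg z) hle _
    nlinarith [mul_le_mul_of_nonneg_left hpow hδpos.le]
  · -- far region case
    have hz1 : 1 ≤ ‖z‖ := le_trans hR1 hgt.le
    have hzpos : 0 < ‖z‖ := lt_of_lt_of_le zero_lt_one hz1
    have heval2 : (∑ i ∈ Finset.range m, (c i : ℂ) * z ^ i) + (c m : ℂ) * z ^ m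
        + (δ : ℂ) * z ^ (m + 1) = 0 := by
      rw [← Finset.sum_range_succ (fun i => (c i : ℂ) * z ^ i) m]
      exact heval
    have hfac : z ^ m * ((δ : ℂ) * z + (c m : ℂ))
        = -∑ i ∈ Finset.range m, (c i : ℂ) * z ^ i := by
      linear_combination heval2
    have habs1 : ‖z‖ ^ m * ‖(δ : ℂ) * z + (c m : ℂ)‖
        = ‖∑ i ∈ Finset.range m, (c i : ℂ) * z ^ i‖ := by
      rw [← norm_pow, ← norm_mul, hfac, norm_neg]
    have hsum : ‖∑ i ∈ Finset.range m, (c i : ℂ) * z ^ i‖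
        ≤ ∑ i ∈ Finset.range m, c i * ‖z‖ ^ i := by
      refine (norm_sum_le _ _).trans (le_of_eq ?_)
      refine Finset.sum_congr rfl fun i hi => ?_
      rw [norm_mul, norm_pow, Complex.norm_real, Real.norm_eq_abs,
        abs_of_pos (hc i (le_of_lt (Finset.mem_range.mp hi)))]
    have h2 : (∑ i ∈ Finset.range m, c i * ‖z‖ ^ i) * ‖z‖
        ≤ S * ‖z‖ ^ m := by
      rw [hSdef, Finset.sum_mul, Finset.sum_mul]
      refine Finset.sum_le_sum fun i hi => ?_
      rw [mul_assoc, ← pow_succ]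
      exact mul_le_mul_of_nonneg_left
        (pow_le_pow_right₀ hz1 (Finset.mem_range.mp hi)) (hc i (le_of_lt (Finset.mem_range.mp hi))).le
    set A : ℝ := ‖(δ : ℂ) * z + (c m : ℂ)‖ with hAdef
    have hA3 : A * ‖z‖ ≤ S := by
      have h3 : ‖z‖ ^ m * A * ‖z‖ ≤ S * ‖z‖ ^ m := by
        calc ‖z‖ ^ m * A * ‖z‖
            = ‖∑ i ∈ Finset.range m, (c i : ℂ) * z ^ i‖ * ‖z‖ := by
              rw [habs1]
          _ ≤ (∑ i ∈ Finset.range m, c i * ‖z‖ ^ i) * ‖z‖ :=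
              mul_le_mul_of_nonneg_right hsum (norm_nonneg z)
          _ ≤ S * ‖z‖ ^ m := h2
      have hpm : 0 < ‖z‖ ^ m := pow_pos hzpos m
      nlinarith
    have hcmA : c m ≤ A := by
      have hre2 : ((δ : ℂ) * z + (c m : ℂ)).re = δ * z.re + c m := by simp
      have h4 := Complex.re_le_norm ((δ : ℂ) * z + (c m : ℂ))
      rw [hre2] at h4
      nlinarith [mul_nonneg hδpos.le hre]
    have hRS : c m * R = S + c m := by rw [hRdef]; field_simp
    nlinarith [mul_lt_mul_of_pos_left hgt hcm, mul_le_mul_of_nonneg_right hcmA hzpos.le]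

lemma hurwitz_ind (n : ℕ) (hn : 1 ≤ n) (ε : ℝ) (hε : 0 < ε) (k : ℕ) :
    ∀ c : ℕ → ℝ, (∀ i ≤ n, 0 < c i) →
    HurwitzStable (∑ i ∈ Finset.range (n + 1), Polynomial.C (c i) * Polynomial.X ^ i) →
    ∃ c' : ℕ → ℝ, (∀ i ≤ n, c' i = c i) ∧
      (∀ i, n < i → i ≤ n + k → 0 < c' i ∧ c' i < ε) ∧
      HurwitzStable (∑ i ∈ Finset.range (n + k + 1), Polynomial.C (c' i) * Polynomial.X ^ i) := by
  induction k with
  | zero =>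
    intro c hc hst
    exact ⟨c, fun i _ => rfl, fun i h1 h2 => absurd (lt_of_lt_of_le h1 h2) (lt_irrefl n), hst⟩
  | succ k ih =>
    intro c hc hst
    obtain ⟨c', hc'eq, hc'pos, hc'st⟩ := ih c hc hst
    have hcall : ∀ i ≤ n + k, 0 < c' i := by
      intro i hi
      rcases le_or_gt i n with h | h
      · rw [hc'eq i h]; exact hc i h
      · exact (hc'pos i h hi).1
    obtain ⟨δ, hδpos, hδε, hδst⟩ := hurwitz_step (n + k) (le_trans hn (Nat.le_add_right n k))
      c' hcall hc'st ε hε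
    refine ⟨Function.update c' (n + k + 1) δ, ?_, ?_, ?_⟩
    · intro i hi
      rw [Function.update_of_ne (by omega)]
      exact hc'eq i hi
    · intro i h1 h2
      rcases eq_or_lt_of_le h2 with h | h
      · rw [h, show n + (k + 1) = n + k + 1 by omega, Function.update_self]
        exact ⟨hδpos, hδε⟩
      · rw [Function.update_of_ne (by omega)]
        exact hc'pos i h1 (by omega)
    · exact hδst

theorem stable_extension (n N : ℕ) (hn : 1 ≤ n) (hN : n < N) (a : ℕ → ℝ)
    (ha : ∀ i ≤ n, 0 < a i)
    (hf : HurwitzStable (∑ i ∈ Finset.range (n + 1), Polynomial.C (a i) * Polynomial.X ^ i)) :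
    ∀ ε > 0, ∃ b : ℕ → ℝ,
      (∀ i, n + 1 ≤ i → i ≤ N → 0 < b i ∧ b i < ε) ∧
      HurwitzStable ((∑ i ∈ Finset.range (n + 1), Polynomial.C (a i) * Polynomial.X ^ i) +
        ∑ i ∈ Finset.Icc (n + 1) N, Polynomial.C (b i) * Polynomial.X ^ i) := by
  intro ε hε
  obtain ⟨c', hc'eq, hc'pos, hc'st⟩ := hurwitz_ind n hn ε hε (N - n) a ha hf
  have hnk : n + (N - n) = N := by omega
  rw [hnk] at hc'pos hc'st
  refine ⟨c', fun i h1 h2 => hc'pos i (by omega) h2, ?_⟩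
  have hsplit : (∑ i ∈ Finset.range (N + 1), Polynomial.C (c' i) * Polynomial.X ^ i)
      = (∑ i ∈ Finset.range (n + 1), Polynomial.C (a i) * Polynomial.X ^ i) +
        ∑ i ∈ Finset.Icc (n + 1) N, Polynomial.C (c' i) * Polynomial.X ^ i := by
    rw [Finset.range_eq_Ico, ← Finset.sum_Ico_consecutive _ (Nat.zero_le (n + 1)) (by omega),
      ← Finset.range_eq_Ico, Finset.Ico_add_one_right_eq_Icc]
    congr 1
    exact Finset.sum_congr rfl fun i hi => by
      rw [hc'eq i (Nat.lt_succ_iff.mp (Finset.mem_range.mp hi))]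
  rw [← hsplit]
  exact hc'st
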